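/- Let K ≥ 1 and let x_1 ≤ x_2 ≤ … ≤ x_K and y_1 ≤ y_2 ≤ … ≤ y_K be real numbers. Let P = (1/K)·∑_{i=1}^K δ_{x_i} and Q = (1/K)·∑_{i=1}^K δ_{y_i} be the discrete uniform measures with these realizations. Then P second-order stochastically dominates Q if and only if for every k ∈ {1, …, K}, ∑_{i=1}^k x_i ≥ ∑_{i=1}^k y_i. -/

import Mathlib

open MeasureTheory ProbabilityTheory
open scoped NNReal ENNReal

/-- `P` second-order stochastically dominates `Q`. -/
def SSD (P Q : Measure ℝ) : Prop :=
  ∀ u : ℝ, (∫ z in Set.Iic u, (cdf P z - cdf Q z)) ≤ 0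

/-- The discrete uniform measure with `K` equiprobable realizations `x 0, …, x (K-1)`. -/
noncomputable def discUnif (K : ℕ) (x : Fin K → ℝ) : Measure ℝ :=
  ((K : ℝ≥0∞))⁻¹ • ∑ i : Fin K, Measure.dirac (x i)

lemma discUnif_apply (K : ℕ) (x : Fin K → ℝ) {s : Set ℝ} (hs : MeasurableSet s) :
    discUnif K x s = (K : ℝ≥0∞)⁻¹ * ∑ i : Fin K, s.indicator (fun _ => (1:ℝ≥0∞)) (x i) := by
  rw [discUnif, Measure.smul_apply, Measure.finset_sum_apply, smul_eq_mul]
  congr 1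
  exact Finset.sum_congr rfl fun i _ => by rw [Measure.dirac_apply' _ hs]; rfl

instance discUnif_prob (K : ℕ) [hK : NeZero K] (x : Fin K → ℝ) :
    IsProbabilityMeasure (discUnif K x) := by
  constructor
  rw [discUnif_apply K x MeasurableSet.univ]
  simp only [Set.indicator_univ, Finset.sum_const, Finset.card_univ, Fintype.card_fin,
    nsmul_eq_mul, mul_one]
  exact ENNReal.inv_mul_cancel (by exact_mod_cast hK.out) (ENNReal.natCast_ne_top K)

lemma cdf_discUnif (K : ℕ) [NeZero K] (x : Fin K → ℝ) (z : ℝ) :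
    cdf (discUnif K x) z
      = (K : ℝ)⁻¹ * ∑ i : Fin K, (Set.Ici (x i)).indicator (fun _ => (1:ℝ)) z := by
  rw [cdf_eq_real, measureReal_def, discUnif_apply K x measurableSet_Iic]
  rw [ENNReal.toReal_mul, ENNReal.toReal_inv]
  congr 1
  rw [ENNReal.toReal_sum (fun i _ => ne_top_of_le_ne_top (by simp)
    (Set.indicator_le_self' (by simp) (x i)))]
  refine Finset.sum_congr rfl fun i _ => ?_
  by_cases h : x i ≤ z
  · rw [Set.indicator_of_mem (Set.mem_Iic.2 h), Set.indicator_of_mem (Set.mem_Ici.2 h)]; simp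
  · rw [Set.indicator_of_notMem (fun hc => h (Set.mem_Iic.1 hc)),
      Set.indicator_of_notMem (fun hc => h (Set.mem_Ici.1 hc))]; simp

lemma intInd (a u : ℝ) :
    ∫ z in Set.Iic u, (Set.Ici a).indicator (fun _ => (1:ℝ)) z = max (u - a) 0 := by
  rw [MeasureTheory.setIntegral_indicator measurableSet_Ici, Set.Iic_inter_Ici,
    MeasureTheory.setIntegral_const, measureReal_def, Real.volume_Icc, smul_eq_mul, mul_one]
  rcases le_total a u with h | h
  · rw [ENNReal.toReal_ofReal (by linarith), max_eq_left (by linarith)]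
  · rw [ENNReal.ofReal_eq_zero.2 (by linarith), max_eq_right (by linarith)]; simp

lemma intOn (a u : ℝ) :
    MeasureTheory.IntegrableOn ((Set.Ici a).indicator (fun _ => (1:ℝ))) (Set.Iic u) := by
  rw [MeasureTheory.IntegrableOn, MeasureTheory.integrable_indicator_iff measurableSet_Ici,
    MeasureTheory.IntegrableOn, Measure.restrict_restrict measurableSet_Ici]
  refine (MeasureTheory.integrableOn_const_iff (by simp)).2 (Or.inr ?_)
  rw [Set.Ici_inter_Iic, Real.volume_Icc]
  exact ENNReal.ofReal_lt_top

lemma cdf_integrableOn (K : ℕ) [NeZero K] (x : Fin K → ℝ) (u : ℝ) :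
    MeasureTheory.IntegrableOn (fun z => cdf (discUnif K x) z) (Set.Iic u) := by
  have : (fun z => cdf (discUnif K x) z)
      = fun z => (K : ℝ)⁻¹ * ∑ i : Fin K, (Set.Ici (x i)).indicator (fun _ => (1:ℝ)) z := by
    funext z; exact cdf_discUnif K x z
  rw [this]
  exact (MeasureTheory.integrable_finset_sum _ (fun i _ => intOn (x i) u)).const_mul _

lemma integral_cdf_discUnif (K : ℕ) [NeZero K] (x : Fin K → ℝ) (u : ℝ) :
    ∫ z in Set.Iic u, cdf (discUnif K x) z
      = (K : ℝ)⁻¹ * ∑ i : Fin K, max (u - x i) 0 := by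
  simp_rw [cdf_discUnif]
  rw [MeasureTheory.integral_const_mul,
    MeasureTheory.integral_finset_sum _ (fun i _ => intOn (x i) u)]
  congr 1
  exact Finset.sum_congr rfl fun i _ => intInd (x i) u

lemma integral_cdf_sub (K : ℕ) [NeZero K] (x y : Fin K → ℝ) (u : ℝ) :
    ∫ z in Set.Iic u, (cdf (discUnif K x) z - cdf (discUnif K y) z)
      = (K : ℝ)⁻¹ * ((∑ i : Fin K, max (u - x i) 0) - ∑ i : Fin K, max (u - y i) 0) := by
  rw [MeasureTheory.integral_sub (cdf_integrableOn K x u) (cdf_integrableOn K y u),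
    integral_cdf_discUnif, integral_cdf_discUnif, mul_sub]

/-- The pointwise inequality implies prefix-sum dominance. -/
lemma pointwise_of_prefix (K : ℕ) (x y : Fin K → ℝ) (hx : Monotone x)
    (hpre : ∀ k : Fin K, ∑ i ∈ Finset.Iic k, y i ≤ ∑ i ∈ Finset.Iic k, x i) (u : ℝ) :
    ∑ i : Fin K, max (u - x i) 0 ≤ ∑ i : Fin K, max (u - y i) 0 := by
  classical
  set S : Finset (Fin K) := Finset.univ.filter (fun i => x i < u) with hSdef
  have hLHS : ∑ i : Fin K, max (u - x i) 0 = ∑ i ∈ S, (u - x i) := by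
    rw [← Finset.sum_filter_add_sum_filter_not Finset.univ (fun i => x i < u)
      (fun i => max (u - x i) 0)]
    rw [Finset.sum_congr rfl (fun i hi => max_eq_left (by
      have := (Finset.mem_filter.1 hi).2; linarith))]
    rw [Finset.sum_congr rfl (fun i hi => max_eq_right (by
      have := (Finset.mem_filter.1 hi).2; push_neg at this; linarith) :
        ∀ i ∈ Finset.univ.filter (fun i => ¬ x i < u), max (u - x i) 0 = 0)]
    simp [hSdef]
  rw [hLHS]
  rcases S.eq_empty_or_nonempty with hS | hS
  · rw [hS]; simp
    exact Finset.sum_nonneg fun i _ => le_max_right _ _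
  · set k := S.max' hS with hk
    have hkS : k ∈ S := S.max'_mem hS
    have hku : x k < u := (Finset.mem_filter.1 hkS).2
    have hSeq : S = Finset.Iic k := by
      ext i
      simp only [hSdef, Finset.mem_filter, Finset.mem_univ, true_and, Finset.mem_Iic]
      constructor
      · intro hi; exact S.le_max' i (by simp [hSdef, hi])
      · intro hi; exact lt_of_le_of_lt (hx hi) hku
    rw [hSeq]
    calc ∑ i ∈ Finset.Iic k, (u - x i) ≤ ∑ i ∈ Finset.Iic k, (u - y i) := by
          rw [Finset.sum_sub_distrib, Finset.sum_sub_distrib]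
          have := hpre k; linarith
      _ ≤ ∑ i ∈ Finset.Iic k, max (u - y i) 0 :=
          Finset.sum_le_sum fun i _ => le_max_left _ _
      _ ≤ ∑ i : Fin K, max (u - y i) 0 :=
          Finset.sum_le_sum_of_subset_of_nonneg (Finset.subset_univ _)
            (fun i _ _ => le_max_right _ _)

/-- Prefix-sum dominance follows from the pointwise inequality. -/
lemma prefix_of_pointwise (K : ℕ) (x y : Fin K → ℝ) (hy : Monotone y)
    (hpt : ∀ u : ℝ, ∑ i : Fin K, max (u - x i) 0 ≤ ∑ i : Fin K, max (u - y i) 0)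
    (k : Fin K) : ∑ i ∈ Finset.Iic k, y i ≤ ∑ i ∈ Finset.Iic k, x i := by
  have h1 : ∑ i ∈ Finset.Iic k, (y k - x i) ≤ ∑ i : Fin K, max (y k - x i) 0 :=
    le_trans (Finset.sum_le_sum fun i _ => le_max_left _ _)
      (Finset.sum_le_sum_of_subset_of_nonneg (Finset.subset_univ _)
        (fun i _ _ => le_max_right _ _))
  have h2 : ∑ i : Fin K, max (y k - y i) 0 = ∑ i ∈ Finset.Iic k, (y k - y i) := by
    rw [← Finset.sum_subset (Finset.subset_univ (Finset.Iic k))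
      (fun i _ hi => max_eq_right (by
        have : k < i := by simpa using (Finset.mem_Iic.not.1 hi)
        have := hy this.le; linarith))]
    exact Finset.sum_congr rfl fun i hi => max_eq_left (by
      have := hy (Finset.mem_Iic.1 hi); linarith)
  have h3 := le_trans h1 (le_of_le_of_eq (hpt (y k)) h2)
  rw [Finset.sum_sub_distrib, Finset.sum_sub_distrib] at h3
  linarith

/-- SSD between discrete uniform distributions with ordered realizations is characterized
by dominance of all partial sums. -/
theorem ssd_discrete_uniform_iff (K : ℕ) (hK : 1 ≤ K) (x y : Fin K → ℝ)
    (hx : Monotone x) (hy : Monotone y) :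
    SSD (discUnif K x) (discUnif K y) ↔
      ∀ k : Fin K, ∑ i ∈ Finset.Iic k, y i ≤ ∑ i ∈ Finset.Iic k, x i := by
  haveI : NeZero K := ⟨by omega⟩
  have hKpos : (0:ℝ) < (K : ℝ)⁻¹ := by positivity
  have key : SSD (discUnif K x) (discUnif K y)
      ↔ ∀ u : ℝ, ∑ i : Fin K, max (u - x i) 0 ≤ ∑ i : Fin K, max (u - y i) 0 := by
    unfold SSD
    constructor
    · intro h u
      have := h u
      rw [integral_cdf_sub] at this
      nlinarith
    · intro h u
      rw [integral_cdf_sub]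
      have := h u
      nlinarith
  rw [key]
  exact ⟨fun h k => prefix_of_pointwise K x y hy h k,
    fun h u => pointwise_of_prefix K x y hx h u⟩
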